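/- arXiv:1705.05088 — 2 statements merged into one kernel-verified Lean document; each statement's English description precedes it below -/
import Mathlib

section
/- The Pareto frontier of a mitigation-analysis task always exists, is unique, is non-empty, and is finite. Precisely: the set of mitigation strategies that are not dominated by any other mitigation strategy is non-empty (it contains the empty strategy) and is a finite set. -/
/-- A fix-action over network propositions `P`: precondition and postcondition
are finite sets of literals (a literal is a pair of a proposition and a
polarity, `true` for a positive and `false` for a negative occurrence),
containing at most one literal per proposition, together with a strictly
positive real cost. -/
structure FixAction (P : Type*) where
  pre : Finset (P × Bool)
  post : Finset (P × Bool)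
  cost : ℝ
  cost_pos : 0 < cost
  pre_unique : ∀ (p : P) (b b' : Bool), (p, b) ∈ pre → (p, b') ∈ pre → b = b'
  post_unique : ∀ (p : P) (b b' : Bool), (p, b) ∈ post → (p, b') ∈ post → b = b'

variable {P : Type*} [DecidableEq P]

/-- A network state `s` satisfies a literal `(p, true)` iff `p ∈ s`,
and satisfies `(p, false)` iff `p ∉ s`. -/
def satLit (s : Finset P) (l : P × Bool) : Prop :=
  (l.1 ∈ s) ↔ l.2 = true

/-- A fix-action is applicable to a state if the state satisfies every
literal of its precondition. -/
def FixAction.applicable (f : FixAction P) (s : Finset P) : Prop :=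
  ∀ l ∈ f.pre, satLit s l

/-- The result `s[f]` of applying a fix-action: every proposition occurring
positively in `post f`, together with every proposition of `s` whose
negation does not occur in `post f`. -/
def FixAction.applyTo (f : FixAction P) (s : Finset P) : Finset P :=
  (f.post.filter (fun l => l.2 = true)).image Prod.fst ∪
    s.filter (fun p => (p, false) ∉ f.post)

/-- Applicability of a finite sequence of fix-actions to a state. -/
def seqApplicable (s : Finset P) : List (FixAction P) → Prop
  | [] => True
  | f :: σ => f.applicable s ∧ seqApplicable (f.applyTo s) σ

/-- The result `s[σ]` of applying a sequence of fix-actions. -/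
def seqApply (s : Finset P) : List (FixAction P) → Finset P
  | [] => s
  | f :: σ => seqApply (f.applyTo s) σ

/-- The cost of a sequence of fix-actions: the sum of the costs of its
elements. -/
noncomputable def seqCost (σ : List (FixAction P)) : ℝ :=
  (σ.map FixAction.cost).sum

/-- A mitigation strategy: a finite sequence of fix-actions from `F`,
applicable to the initial network state `s₀`, whose cost is within the
mitigation budget `b ∈ ℝ₊ ∪ {∞}`. -/
def IsStrategy (F : Finset (FixAction P)) (s₀ : Finset P) (b : EReal)
    (σ : List (FixAction P)) : Prop :=
  (∀ f ∈ σ, f ∈ F) ∧ seqApplicable s₀ σ ∧ (seqCost σ : EReal) ≤ b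

/-- `σ₁` dominates `σ₂` (w.r.t. initial state `s₀` and maximal attack success
probability `pstar`). -/
def Dominates (s₀ : Finset P) (pstar : Finset P → ℝ)
    (σ₁ σ₂ : List (FixAction P)) : Prop :=
  (pstar (seqApply s₀ σ₁) < pstar (seqApply s₀ σ₂) ∧ seqCost σ₁ ≤ seqCost σ₂) ∨
    (pstar (seqApply s₀ σ₁) ≤ pstar (seqApply s₀ σ₂) ∧ seqCost σ₁ < seqCost σ₂)

/-- The Pareto frontier: the set of mitigation strategies not dominated by
any mitigation strategy. -/
def ParetoFrontier (F : Finset (FixAction P)) (s₀ : Finset P) (b : EReal)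
    (pstar : Finset P → ℝ) : Set (List (FixAction P)) :=
  {σ | IsStrategy F s₀ b σ ∧
    ∀ σ', IsStrategy F s₀ b σ' → ¬ Dominates s₀ pstar σ' σ}


lemma seqCost_cons (f : FixAction P) (σ : List (FixAction P)) :
    seqCost (f :: σ) = f.cost + seqCost σ := by
  simp [seqCost]

lemma seqCost_nonneg (σ : List (FixAction P)) : 0 ≤ seqCost σ := by
  induction σ with
  | nil => simp [seqCost]
  | cons f σ ih =>
    rw [seqCost_cons]
    have := f.cost_pos
    linarith

lemma seqCost_eq_nil (σ : List (FixAction P)) (h : seqCost σ ≤ 0) : σ = [] := by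
  cases σ with
  | nil => rfl
  | cons f σ =>
    exfalso
    have h1 := seqCost_nonneg σ
    have h2 := f.cost_pos
    rw [seqCost_cons] at h
    linarith

lemma length_mul_le_seqCost (F : Finset (FixAction P)) (c : ℝ)
    (hc : ∀ f ∈ F, c ≤ f.cost) (σ : List (FixAction P)) (hσ : ∀ f ∈ σ, f ∈ F) :
    (σ.length : ℝ) * c ≤ seqCost σ := by
  induction σ with
  | nil => simp [seqCost]
  | cons f σ ih =>
    rw [seqCost_cons]
    have h1 := hc f (hσ f (List.mem_cons_self))
    have h2 := ih (fun g hg => hσ g (List.mem_cons_of_mem _ hg))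
    have h3 : ((f :: σ).length : ℝ) * c = (σ.length : ℝ) * c + c := by
      simp only [List.length_cons]
      push_cast
      ring
    linarith

/-- The Pareto frontier of a mitigation-analysis task always exists, is
unique (it is a well-defined set), is non-empty (it contains the empty
strategy), and is finite. -/
theorem pareto_frontier_nonempty_and_finite
    {P : Type*} [DecidableEq P] [Fintype P]
    (F : Finset (FixAction P)) (s₀ : Finset P)
    (b : EReal) (hb : 0 ≤ b)
    (pstar : Finset P → ℝ) (hpstar : ∀ s, 0 ≤ pstar s) :
    ([] : List (FixAction P)) ∈ ParetoFrontier F s₀ b pstar ∧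
    (ParetoFrontier F s₀ b pstar).Nonempty ∧
    (ParetoFrontier F s₀ b pstar).Finite := by
  have hnil : ([] : List (FixAction P)) ∈ ParetoFrontier F s₀ b pstar := by
    refine ⟨⟨by simp, trivial, by simpa [seqCost] using hb⟩, ?_⟩
    intro σ' h' hd
    rcases hd with ⟨hlt, hle⟩ | ⟨hle, hlt⟩
    · have : σ' = [] := seqCost_eq_nil σ' (by simpa [seqCost] using hle)
      rw [this] at hlt
      exact lt_irrefl _ hlt
    · have h0 := seqCost_nonneg σ'
      simp [seqCost] at hlt h0
      linarith
  refine ⟨hnil, ⟨[], hnil⟩, ?_⟩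
  -- cost of a frontier strategy is minimal among strategies with p* ≤ its p*
  have key : ∀ σ ∈ ParetoFrontier F s₀ b pstar, ∀ σ', IsStrategy F s₀ b σ' →
      pstar (seqApply s₀ σ') ≤ pstar (seqApply s₀ σ) → seqCost σ ≤ seqCost σ' := by
    intro σ hσ σ' h' hp
    by_contra h
    exact hσ.2 σ' h' (Or.inr ⟨hp, lt_of_not_ge h⟩)
  set g : ℝ → ℝ := fun v =>
    sInf (seqCost '' {σ | IsStrategy F s₀ b σ ∧ pstar (seqApply s₀ σ) ≤ v}) with hg
  -- each frontier strategy's cost equals g of its p* level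
  have hcost : ∀ σ ∈ ParetoFrontier F s₀ b pstar,
      seqCost σ = g (pstar (seqApply s₀ σ)) := by
    intro σ hσ
    have hmem : seqCost σ ∈
        seqCost '' {σ' | IsStrategy F s₀ b σ' ∧
          pstar (seqApply s₀ σ') ≤ pstar (seqApply s₀ σ)} :=
      ⟨σ, ⟨hσ.1, le_refl _⟩, rfl⟩
    have hlb : ∀ x ∈ seqCost '' {σ' | IsStrategy F s₀ b σ' ∧
        pstar (seqApply s₀ σ') ≤ pstar (seqApply s₀ σ)}, seqCost σ ≤ x := by
      rintro x ⟨σ', ⟨h1, h2⟩, rfl⟩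
      exact key σ hσ σ' h1 h2
    exact le_antisymm (le_csInf ⟨_, hmem⟩ hlb) (csInf_le ⟨seqCost σ, hlb⟩ hmem)
  -- a uniform bound on costs of frontier strategies
  have huniv : ((Finset.univ : Finset (Finset P)).image fun t => g (pstar t)).Nonempty :=
    Finset.Nonempty.image ⟨∅, Finset.mem_univ _⟩ _
  set M : ℝ := ((Finset.univ : Finset (Finset P)).image fun t => g (pstar t)).max' huniv
    with hM
  have hcM : ∀ σ ∈ ParetoFrontier F s₀ b pstar, seqCost σ ≤ M := by
    intro σ hσ
    rw [hcost σ hσ]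
    exact Finset.le_max' _ (g (pstar (seqApply s₀ σ)))
      (Finset.mem_image_of_mem (fun t => g (pstar t)) (Finset.mem_univ (seqApply s₀ σ)))
  rcases eq_or_ne F ∅ with hF | hF
  · refine (Set.finite_singleton ([] : List (FixAction P))).subset ?_
    intro σ hσ
    cases σ with
    | nil => exact rfl
    | cons f σ =>
      exact absurd (hσ.1.1 f (List.mem_cons_self)) (by simp [hF])
  · have hFne : (F.image FixAction.cost).Nonempty :=
      Finset.Nonempty.image (Finset.nonempty_iff_ne_empty.2 hF) _
    set c : ℝ := (F.image FixAction.cost).min' hFne with hc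
    have hcpos : 0 < c := by
      have := (F.image FixAction.cost).min'_mem hFne
      rw [Finset.mem_image] at this
      obtain ⟨f, _, hf⟩ := this
      rw [hc, ← hf]
      exact f.cost_pos
    have hcle : ∀ f ∈ F, c ≤ f.cost := fun f hf =>
      Finset.min'_le _ _ (Finset.mem_image_of_mem _ hf)
    set N : ℕ := ⌈M / c⌉₊ with hN
    refine Set.Finite.subset (((List.finite_length_le {f // f ∈ F} N).image
      (List.map Subtype.val))) ?_
    intro σ hσ
    have hlen : σ.length ≤ N := by
      have h1 : (σ.length : ℝ) * c ≤ seqCost σ :=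
        length_mul_le_seqCost F c hcle σ hσ.1.1
      have h2 : seqCost σ ≤ M := hcM σ hσ
      have h3 : (σ.length : ℝ) ≤ M / c := by
        rw [le_div_iff₀ hcpos]
        linarith
      have h4 : (σ.length : ℝ) ≤ (N : ℝ) := h3.trans (Nat.le_ceil _)
      exact_mod_cast h4
    refine ⟨σ.pmap (fun f hf => (⟨f, hf⟩ : {f // f ∈ F})) hσ.1.1, ?_, ?_⟩
    · simpa using hlen
    · simp [List.map_pmap]
end

section
/- Let f₁ and f₂ be commutative fix-actions and let s be a network state such that the two-element sequence f₁, f₂ is applicable to s. Then the sequence f₂, f₁ is also applicable to s, and the resulting states coincide: s[f₁, f₂] = s[f₂, f₁]. -/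
variable {P : Type*} [DecidableEq P]

/-- `f₁` disables `f₂` if some literal in `post f₁` is the negation of a
literal in `pre f₂`. -/
def disablesFix (f₁ f₂ : FixAction P) : Prop :=
  ∃ (p : P) (b : Bool), (p, b) ∈ f₁.post ∧ (p, !b) ∈ f₂.pre

/-- `f₁` and `f₂` conflict if some literal in `post f₁` is the negation of a
literal in `post f₂`. -/
def conflictFix (f₁ f₂ : FixAction P) : Prop :=
  ∃ (p : P) (b : Bool), (p, b) ∈ f₁.post ∧ (p, !b) ∈ f₂.post

/-- `f₁` and `f₂` interfere if they conflict or either disables the other. -/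
def interfereFix (f₁ f₂ : FixAction P) : Prop :=
  conflictFix f₁ f₂ ∨ disablesFix f₁ f₂ ∨ disablesFix f₂ f₁

/-- `f₁` enables `f₂` if some literal of `post f₁` belongs to `pre f₂` or
some literal of `post f₂` belongs to `pre f₁`. -/
def enablesFix (f₁ f₂ : FixAction P) : Prop :=
  (∃ l ∈ f₁.post, l ∈ f₂.pre) ∨ (∃ l ∈ f₂.post, l ∈ f₁.pre)

/-- `f₁` and `f₂` are commutative if they do not interfere and neither
enables the other. -/
def commutativeFix (f₁ f₂ : FixAction P) : Prop :=
  ¬ interfereFix f₁ f₂ ∧ ¬ enablesFix f₁ f₂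


lemma mem_applyTo {P : Type*} [DecidableEq P] (f : FixAction P) (s : Finset P) (p : P) :
    p ∈ f.applyTo s ↔ (p, true) ∈ f.post ∨ (p ∈ s ∧ (p, false) ∉ f.post) := by
  simp only [FixAction.applyTo, Finset.mem_union, Finset.mem_image, Finset.mem_filter]
  constructor
  · rintro (⟨⟨q, b⟩, ⟨hq, hb⟩, rfl⟩ | ⟨hs, hn⟩)
    · subst hb; exact Or.inl hq
    · exact Or.inr ⟨hs, hn⟩
  · rintro (h | ⟨hs, hn⟩)
    · exact Or.inl ⟨(p, true), ⟨h, rfl⟩, rfl⟩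
    · exact Or.inr ⟨hs, hn⟩

lemma applicable_of_comm {P : Type*} [DecidableEq P] {f₁ f₂ : FixAction P}
    (hcomm : commutativeFix f₁ f₂) {s : Finset P}
    (h : f₂.applicable (f₁.applyTo s)) : f₂.applicable s := by
  intro l hl
  have hs := h l hl
  obtain ⟨p, b⟩ := l
  have hpos : (p, true) ∉ f₁.post := by
    intro hmem
    cases b
    · exact hcomm.1 (Or.inr (Or.inl ⟨p, true, hmem, hl⟩))
    · exact hcomm.2 (Or.inl ⟨(p, true), hmem, hl⟩)
  have hneg : (p, false) ∉ f₁.post := by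
    intro hmem
    cases b
    · exact hcomm.2 (Or.inl ⟨(p, false), hmem, hl⟩)
    · exact hcomm.1 (Or.inr (Or.inl ⟨p, false, hmem, hl⟩))
  have : p ∈ f₁.applyTo s ↔ p ∈ s := by
    rw [mem_applyTo]; tauto
  unfold satLit at hs ⊢
  simpa [this] using hs

/-- If `f₁` and `f₂` are commutative fix-actions and the sequence `f₁, f₂` is
applicable to a network state `s`, then the sequence `f₂, f₁` is also
applicable to `s`, and the resulting states coincide. -/
theorem commutative_fix_actions_swap
    {P : Type*} [DecidableEq P]
    (f₁ f₂ : FixAction P) (hcomm : commutativeFix f₁ f₂)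
    (s : Finset P) (happ : seqApplicable s [f₁, f₂]) :
    seqApplicable s [f₂, f₁] ∧ seqApply s [f₁, f₂] = seqApply s [f₂, f₁] := by
  obtain ⟨h1, h2, -⟩ := happ
  have hcomm' : commutativeFix f₂ f₁ := by
    obtain ⟨hi, he⟩ := hcomm
    constructor
    · rintro (⟨p, b, ha, hb⟩ | h | h)
      · exact hi (Or.inl ⟨p, !b, hb, by simpa using ha⟩)
      · exact hi (Or.inr (Or.inr h))
      · exact hi (Or.inr (Or.inl h))
    · rintro (h | h)
      · exact he (Or.inr h)
      · exact he (Or.inl h)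
  have h2' : f₂.applicable s := applicable_of_comm hcomm h2
  have h1' : f₁.applicable (f₂.applyTo s) := by
    intro l hl
    have hs := h1 l hl
    obtain ⟨p, b⟩ := l
    have hpos : (p, true) ∉ f₂.post := by
      intro hmem
      cases b
      · exact hcomm.1 (Or.inr (Or.inr ⟨p, true, hmem, hl⟩))
      · exact hcomm.2 (Or.inr ⟨(p, true), hmem, hl⟩)
    have hneg : (p, false) ∉ f₂.post := by
      intro hmem
      cases b
      · exact hcomm.2 (Or.inr ⟨(p, false), hmem, hl⟩)
      · exact hcomm.1 (Or.inr (Or.inr ⟨p, false, hmem, hl⟩))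
    have : p ∈ f₂.applyTo s ↔ p ∈ s := by
      rw [mem_applyTo]; tauto
    unfold satLit at hs ⊢
    simpa [this] using hs
  refine ⟨⟨h2', h1', trivial⟩, ?_⟩
  simp only [seqApply]
  ext p
  have hc1 : ¬((p, true) ∈ f₁.post ∧ (p, false) ∈ f₂.post) := by
    rintro ⟨ha, hb⟩
    exact hcomm.1 (Or.inl ⟨p, true, ha, hb⟩)
  have hc2 : ¬((p, false) ∈ f₁.post ∧ (p, true) ∈ f₂.post) := by
    rintro ⟨ha, hb⟩
    exact hcomm.1 (Or.inl ⟨p, false, ha, hb⟩)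
  simp only [mem_applyTo]
  tauto
end
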